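/- Let α > 1 and g ∈ (0,1) be real. Define ψ₌ = (1,0), ψ≠ = (g, √(1−g²)), v₁ = (−√((1−g)/2), √((1+g)/2)), v₂ = (√((1+g)/2), √((1−g)/2)) in ℝ², let σ_AE be the 4×4 matrix (1/2)·E₀₀ ⊗ |ψ₌⟩⟨ψ₌| + (1/2)·E₁₁ ⊗ |ψ≠⟩⟨ψ≠| (where E₀₀, E₁₁ are the diagonal matrix units and ⊗ is the Kronecker product), and let M = ((1−g)/2)^((1−α)/(2α))·|v₁⟩⟨v₁| + ((1+g)/2)^((1−α)/(2α))·|v₂⟩⟨v₂|. Define w = −((1−g)/2)^(1/(2α))·v₁ + ((1+g)/2)^(1/(2α))·v₂ and w′ = ((1−g)/2)^(1/(2α))·v₁ + ((1+g)/2)^(1/(2α))·v₂, and set φ = ((1−g)/2)^(1/α) + ((1+g)/2)^(1/α). Then (I₂ ⊗ M)·σ_AE·(I₂ ⊗ M) = (1/2)·(E₀₀ ⊗ |w⟩⟨w| + E₁₁ ⊗ |w′⟩⟨w′|), and ‖w‖² = ‖w′‖² = φ. -/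
import Mathlib

open Matrix Kronecker

lemma aux_mul_vecMulVec {n : Type*} [Fintype n] (M : Matrix n n ℝ) (u v : n → ℝ) :
    M * Matrix.vecMulVec u v = Matrix.vecMulVec (M *ᵥ u) v := by
  ext i j
  simp [Matrix.mul_apply, Matrix.vecMulVec_apply, Matrix.mulVec, dotProduct,
    Finset.sum_mul, mul_assoc]

lemma aux_vecMulVec_mul {n : Type*} [Fintype n] (M : Matrix n n ℝ) (u v : n → ℝ) :
    Matrix.vecMulVec u v * M = Matrix.vecMulVec u (v ᵥ* M) := by
  ext i j
  simp [Matrix.mul_apply, Matrix.vecMulVec_apply, Matrix.vecMul, dotProduct,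
    Finset.mul_sum, mul_assoc]

lemma aux_vecMulVec_mulVec {n : Type*} [Fintype n] (u v x : n → ℝ) :
    Matrix.vecMulVec u v *ᵥ x = (v ⬝ᵥ x) • u := by
  ext i
  simp only [Matrix.mulVec, Matrix.vecMulVec_apply, dotProduct, Pi.smul_apply,
    smul_eq_mul, Finset.sum_mul]
  exact Finset.sum_congr rfl fun k _ => by ring

lemma aux_transpose_vecMulVec {n : Type*} (u v : n → ℝ) :
    (Matrix.vecMulVec u v)ᵀ = Matrix.vecMulVec v u := by
  ext i j
  simp [Matrix.vecMulVec_apply, mul_comm]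

theorem sandwiched_conjugation_identity (α g : ℝ) (hα : 1 < α) (hg : g ∈ Set.Ioo (0 : ℝ) 1) :
    let ψeq : Fin 2 → ℝ := ![1, 0]
    let ψneq : Fin 2 → ℝ := ![g, Real.sqrt (1 - g ^ 2)]
    let v₁ : Fin 2 → ℝ := ![-(Real.sqrt ((1 - g) / 2)), Real.sqrt ((1 + g) / 2)]
    let v₂ : Fin 2 → ℝ := ![Real.sqrt ((1 + g) / 2), Real.sqrt ((1 - g) / 2)]
    let E₀₀ : Matrix (Fin 2) (Fin 2) ℝ := !![1, 0; 0, 0]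
    let E₁₁ : Matrix (Fin 2) (Fin 2) ℝ := !![0, 0; 0, 1]
    let σAE : Matrix (Fin 2 × Fin 2) (Fin 2 × Fin 2) ℝ :=
      (1 / 2 : ℝ) • (E₀₀ ⊗ₖ Matrix.vecMulVec ψeq ψeq) +
        (1 / 2 : ℝ) • (E₁₁ ⊗ₖ Matrix.vecMulVec ψneq ψneq)
    let M : Matrix (Fin 2) (Fin 2) ℝ :=
      (((1 - g) / 2) ^ ((1 - α) / (2 * α))) • Matrix.vecMulVec v₁ v₁ +
        (((1 + g) / 2) ^ ((1 - α) / (2 * α))) • Matrix.vecMulVec v₂ v₂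
    let w : Fin 2 → ℝ :=
      -((((1 - g) / 2) ^ (1 / (2 * α))) • v₁) + (((1 + g) / 2) ^ (1 / (2 * α))) • v₂
    let w' : Fin 2 → ℝ :=
      (((1 - g) / 2) ^ (1 / (2 * α))) • v₁ + (((1 + g) / 2) ^ (1 / (2 * α))) • v₂
    let φ : ℝ := ((1 - g) / 2) ^ (1 / α) + ((1 + g) / 2) ^ (1 / α)
    ((1 : Matrix (Fin 2) (Fin 2) ℝ) ⊗ₖ M) * σAE * ((1 : Matrix (Fin 2) (Fin 2) ℝ) ⊗ₖ M) =
        (1 / 2 : ℝ) • (E₀₀ ⊗ₖ Matrix.vecMulVec w w + E₁₁ ⊗ₖ Matrix.vecMulVec w' w') ∧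
      w ⬝ᵥ w = φ ∧ w' ⬝ᵥ w' = φ := by
  obtain ⟨hg0, hg1⟩ := hg
  intro ψeq ψneq v₁ v₂ E₀₀ E₁₁ σAE M w w' φ
  have ha : (0:ℝ) < (1 - g) / 2 := by linarith
  have hb : (0:ℝ) < (1 + g) / 2 := by linarith
  have hα0 : α ≠ 0 := by positivity
  have key : ∀ x : ℝ, 0 < x →
      x ^ ((1 - α) / (2 * α)) * Real.sqrt x = x ^ (1 / (2 * α)) := by
    intro x hx
    rw [Real.sqrt_eq_rpow, ← Real.rpow_add hx]
    congr 1
    field_simp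
    ring
  have key2 : ∀ x : ℝ, 0 < x →
      x ^ (1 / (2 * α)) * x ^ (1 / (2 * α)) = x ^ (1 / α) := by
    intro x hx
    rw [← Real.rpow_add hx]
    congr 1
    field_simp
    norm_num
  have ha2 : Real.sqrt ((1 - g) / 2) * Real.sqrt ((1 - g) / 2) = (1 - g) / 2 :=
    Real.mul_self_sqrt ha.le
  have hb2 : Real.sqrt ((1 + g) / 2) * Real.sqrt ((1 + g) / 2) = (1 + g) / 2 :=
    Real.mul_self_sqrt hb.le
  have hsq : Real.sqrt (1 - g ^ 2) =
      2 * Real.sqrt ((1 - g) / 2) * Real.sqrt ((1 + g) / 2) := by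
    have h4 : (2 * Real.sqrt ((1 - g) / 2) * Real.sqrt ((1 + g) / 2)) ^ 2 = 1 - g ^ 2 := by
      nlinarith [ha2, hb2]
    rw [← h4, Real.sqrt_sq (by positivity)]
  -- dot products
  have hv1eq : v₁ ⬝ᵥ ψeq = -(Real.sqrt ((1 - g) / 2)) := by
    simp [v₁, ψeq, dotProduct, Fin.sum_univ_two]
  have hv2eq : v₂ ⬝ᵥ ψeq = Real.sqrt ((1 + g) / 2) := by
    simp [v₂, ψeq, dotProduct, Fin.sum_univ_two]
  have hv1neq : v₁ ⬝ᵥ ψneq = Real.sqrt ((1 - g) / 2) := by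
    simp only [v₁, ψneq, dotProduct, Fin.sum_univ_two, Matrix.cons_val_zero,
      Matrix.cons_val_one, Matrix.head_cons]
    rw [hsq]
    linear_combination (2 * Real.sqrt ((1 - g) / 2)) * hb2
  have hv2neq : v₂ ⬝ᵥ ψneq = Real.sqrt ((1 + g) / 2) := by
    simp only [v₂, ψneq, dotProduct, Fin.sum_univ_two, Matrix.cons_val_zero,
      Matrix.cons_val_one, Matrix.head_cons]
    rw [hsq]
    linear_combination (2 * Real.sqrt ((1 + g) / 2)) * ha2
  have hMT : Mᵀ = M := by
    show (_ + _)ᵀ = _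
    rw [Matrix.transpose_add, Matrix.transpose_smul, Matrix.transpose_smul,
      aux_transpose_vecMulVec, aux_transpose_vecMulVec]
  have hvm : ∀ u : Fin 2 → ℝ, u ᵥ* M = M *ᵥ u := by
    intro u
    conv_lhs => rw [← hMT]
    rw [Matrix.vecMul_transpose]
  have hMw : M *ᵥ ψeq = w := by
    show (_ + _) *ᵥ _ = _
    rw [Matrix.add_mulVec, Matrix.smul_mulVec, Matrix.smul_mulVec,
      aux_vecMulVec_mulVec, aux_vecMulVec_mulVec, hv1eq, hv2eq, smul_smul, smul_smul,
      mul_neg, key _ ha, key _ hb, neg_smul]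
  have hMw' : M *ᵥ ψneq = w' := by
    show (_ + _) *ᵥ _ = _
    rw [Matrix.add_mulVec, Matrix.smul_mulVec, Matrix.smul_mulVec,
      aux_vecMulVec_mulVec, aux_vecMulVec_mulVec, hv1neq, hv2neq, smul_smul, smul_smul,
      key _ ha, key _ hb]
  have conj : ∀ (E : Matrix (Fin 2) (Fin 2) ℝ) (u : Fin 2 → ℝ),
      ((1 : Matrix (Fin 2) (Fin 2) ℝ) ⊗ₖ M) * (E ⊗ₖ Matrix.vecMulVec u u) *
        ((1 : Matrix (Fin 2) (Fin 2) ℝ) ⊗ₖ M) =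
      E ⊗ₖ Matrix.vecMulVec (M *ᵥ u) (M *ᵥ u) := by
    intro E u
    rw [← Matrix.mul_kronecker_mul, ← Matrix.mul_kronecker_mul, one_mul, mul_one,
      aux_mul_vecMulVec, aux_vecMulVec_mul, hvm]
  refine ⟨?_, ?_, ?_⟩
  · show _ * (_ + _) * _ = _
    rw [Matrix.mul_add, Matrix.add_mul, Matrix.mul_smul, Matrix.mul_smul,
      Matrix.smul_mul, Matrix.smul_mul, conj E₀₀ ψeq, conj E₁₁ ψneq, hMw, hMw', smul_add]
  · show w ⬝ᵥ w = ((1 - g) / 2) ^ (1 / α) + ((1 + g) / 2) ^ (1 / α)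
    rw [← key2 _ ha, ← key2 _ hb]
    simp only [w, v₁, v₂, dotProduct, Fin.sum_univ_two, Pi.add_apply, Pi.neg_apply,
      Pi.smul_apply, smul_eq_mul, Matrix.cons_val_zero, Matrix.cons_val_one, Matrix.head_cons]
    linear_combination
      (((1 - g) / 2) ^ (1 / (2 * α)) * ((1 - g) / 2) ^ (1 / (2 * α)) +
        ((1 + g) / 2) ^ (1 / (2 * α)) * ((1 + g) / 2) ^ (1 / (2 * α))) * ha2 +
      (((1 - g) / 2) ^ (1 / (2 * α)) * ((1 - g) / 2) ^ (1 / (2 * α)) +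
        ((1 + g) / 2) ^ (1 / (2 * α)) * ((1 + g) / 2) ^ (1 / (2 * α))) * hb2
  · show w' ⬝ᵥ w' = ((1 - g) / 2) ^ (1 / α) + ((1 + g) / 2) ^ (1 / α)
    rw [← key2 _ ha, ← key2 _ hb]
    simp only [w', v₁, v₂, dotProduct, Fin.sum_univ_two, Pi.add_apply,
      Pi.smul_apply, smul_eq_mul, Matrix.cons_val_zero, Matrix.cons_val_one, Matrix.head_cons]
    linear_combination
      (((1 - g) / 2) ^ (1 / (2 * α)) * ((1 - g) / 2) ^ (1 / (2 * α)) +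
        ((1 + g) / 2) ^ (1 / (2 * α)) * ((1 + g) / 2) ^ (1 / (2 * α))) * ha2 +
      (((1 - g) / 2) ^ (1 / (2 * α)) * ((1 - g) / 2) ^ (1 / (2 * α)) +
        ((1 + g) / 2) ^ (1 / (2 * α)) * ((1 + g) / 2) ^ (1 / (2 * α))) * hb2
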